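/- The kernel of the operator $L_\mu^- = -\frac{d^2}{dx^2} + \mu - \phi_\mu^2$ with domain $H^2\cap H^1_0(0,1)$ is exactly $\mathbb{C}\,\phi_\mu$: it is one-dimensional, spanned by the ground state. -/

import Mathlib

open Set

/-- The focusing ground state predicate. -/
def IsGroundState (μ : ℝ) (φ : ℝ → ℝ) : Prop :=
  ∃ φ' φ'' φ''' : ℝ → ℝ,
    (∀ x ∈ Set.Icc (0:ℝ) 1, HasDerivAt φ (φ' x) x ∧ HasDerivAt φ' (φ'' x) x ∧
      HasDerivAt φ'' (φ''' x) x) ∧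
    ContinuousOn φ''' (Set.Icc 0 1) ∧
    φ 0 = 0 ∧ φ 1 = 0 ∧
    (∀ x ∈ Set.Ioo (0:ℝ) 1, 0 < φ x) ∧
    (∀ x ∈ Set.Icc (0:ℝ) 1, φ'' x + φ x ^ 3 = μ * φ x)

lemma lin_uniq {q : ℝ → ℝ} {C : NNReal} (hq : ∀ x, |q x| ≤ C)
    {u u' : ℝ → ℂ}
    (hu : ∀ x ∈ Set.Icc (0:ℝ) 1, HasDerivAt u (u' x) x)
    (hu' : ∀ x ∈ Set.Icc (0:ℝ) 1, HasDerivAt u' ((q x : ℂ) * u x) x)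
    (h0 : u 0 = 0) (h0' : u' 0 = 0) :
    ∀ x ∈ Set.Icc (0:ℝ) 1, u x = 0 := by
  set v : ℝ → ℂ × ℂ → ℂ × ℂ := fun t p => (p.2, (q t : ℂ) * p.1) with hv
  set K : NNReal := max 1 C with hK
  have hlip : ∀ t, LipschitzWith K (v t) := by
    intro t
    apply LipschitzWith.of_dist_le_mul
    intro p p'
    rw [Prod.dist_eq, Prod.dist_eq]
    have hKR : (1:ℝ) ≤ K := by exact_mod_cast le_max_left 1 C
    have hCK : (C:ℝ) ≤ K := by exact_mod_cast le_max_right 1 C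
    apply max_le
    · calc dist p.2 p'.2 ≤ max (dist p.1 p'.1) (dist p.2 p'.2) := le_max_right _ _
        _ ≤ K * max (dist p.1 p'.1) (dist p.2 p'.2) := by
            nlinarith [dist_nonneg.trans (le_max_right (dist p.1 p'.1) (dist p.2 p'.2))]
    · have : dist ((q t : ℂ) * p.1) ((q t : ℂ) * p'.1) = |q t| * dist p.1 p'.1 := by
        rw [dist_eq_norm, dist_eq_norm, ← mul_sub, norm_mul]
        simp
      rw [this]
      calc |q t| * dist p.1 p'.1 ≤ (K:ℝ) * dist p.1 p'.1 := by
            apply mul_le_mul_of_nonneg_right ((hq t).trans hCK) dist_nonneg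
        _ ≤ K * max (dist p.1 p'.1) (dist p.2 p'.2) := by
            apply mul_le_mul_of_nonneg_left (le_max_left _ _) (by positivity)
  have heq : EqOn (fun t => (u t, u' t)) (fun _ : ℝ => ((0:ℂ), (0:ℂ))) (Icc 0 1) := by
    apply ODE_solution_unique_of_mem_Icc_right (s := fun _ => (univ : Set (ℂ × ℂ)))
      (fun t _ => (hlip t).lipschitzOnWith)
    · intro t ht
      exact (((hu t ht).continuousAt).prodMk ((hu' t ht).continuousAt)).continuousWithinAt
    · intro t ht
      exact (((hu t (Ico_subset_Icc_self ht)).prodMk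
        (hu' t (Ico_subset_Icc_self ht)))).hasDerivWithinAt
    · intro t _; trivial
    · exact continuousOn_const
    · intro t ht
      have h1 : v t ((0:ℂ), (0:ℂ)) = ((0:ℂ), (0:ℂ)) := by simp [hv]
      rw [h1]
      exact (hasDerivAt_const t ((0:ℂ), (0:ℂ))).hasDerivWithinAt
    · intro t _; trivial
    · simp [h0, h0']
  intro x hx
  have := heq hx
  exact congrArg Prod.fst this

/-- the kernel of `L_μ⁻ = -d²/dx² + μ - φ_μ²` with Dirichlet conditions on
`(0,1)` is exactly `ℂ φ_μ`. -/
theorem stmt_7 (μ : ℝ) (hμ : -Real.pi ^ 2 < μ) (φ : ℝ → ℝ)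
    (hφ : IsGroundState μ φ) :
    (∀ w w' w'' : ℝ → ℂ,
      (∀ x ∈ Set.Icc (0:ℝ) 1, HasDerivAt w (w' x) x ∧ HasDerivAt w' (w'' x) x) →
      w 0 = 0 → w 1 = 0 →
      (∀ x ∈ Set.Icc (0:ℝ) 1, -w'' x + ((μ : ℂ) - (φ x : ℂ) ^ 2) * w x = 0) →
      ∃ c : ℂ, ∀ x ∈ Set.Icc (0:ℝ) 1, w x = c * (φ x : ℂ)) ∧
    (∀ c : ℂ, ∃ w' w'' : ℝ → ℂ,
      (∀ x ∈ Set.Icc (0:ℝ) 1,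
        HasDerivAt (fun y : ℝ => c * (φ y : ℂ)) (w' x) x ∧ HasDerivAt w' (w'' x) x) ∧
      (∀ x ∈ Set.Icc (0:ℝ) 1,
        -w'' x + ((μ : ℂ) - (φ x : ℂ) ^ 2) * (c * (φ x : ℂ)) = 0)) := by
  obtain ⟨φ', φ'', φ''', hdd, _, h0, h1, hpos, hODE⟩ := hφ
  -- the clamped potential
  set q : ℝ → ℝ := fun x => μ - (φ (max 0 (min x 1)))^2 with hqdef
  have hclamp : ∀ x ∈ Set.Icc (0:ℝ) 1, max 0 (min x 1) = x := by
    intro x hx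
    rw [min_eq_left hx.2, max_eq_right hx.1]
  have hqx : ∀ x ∈ Set.Icc (0:ℝ) 1, q x = μ - φ x ^ 2 := by
    intro x hx; simp only [hqdef, hclamp x hx]
  have hφc : ContinuousOn φ (Set.Icc (0:ℝ) 1) :=
    fun x hx => ((hdd x hx).1.continuousAt).continuousWithinAt
  have hφcont : ContinuousOn (fun x => |μ - φ x ^ 2|) (Set.Icc 0 1) :=
    (continuousOn_const.sub (hφc.pow 2)).abs
  obtain ⟨C, hC⟩ := isCompact_Icc.exists_bound_of_continuousOn hφcont
  have hqbound : ∀ x, |q x| ≤ C.toNNReal := by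
    intro x
    have hmem : max 0 (min x 1) ∈ Set.Icc (0:ℝ) 1 :=
      ⟨le_max_left _ _, max_le (by norm_num) (min_le_right _ _)⟩
    have := hC _ hmem
    simp only [Real.norm_eq_abs, abs_abs] at this
    calc |q x| ≤ C := this
      _ ≤ C.toNNReal := Real.le_coe_toNNReal C
  -- φ'' = q * φ on Icc
  have hφODE : ∀ x ∈ Set.Icc (0:ℝ) 1, φ'' x = q x * φ x := by
    intro x hx
    have h := hODE x hx
    rw [hqx x hx]; nlinarith [h]
  -- φ'(0) ≠ 0
  have hd0 : φ' 0 ≠ 0 := by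
    intro hz
    have hzero : ∀ x ∈ Set.Icc (0:ℝ) 1, ((φ x : ℂ)) = 0 := by
      apply lin_uniq hqbound (u' := fun x => (φ' x : ℂ))
      · intro x hx; exact (hdd x hx).1.ofReal_comp
      · intro x hx
        have := (hdd x hx).2.1.ofReal_comp
        have he : ((q x : ℂ)) * (φ x : ℂ) = (φ'' x : ℂ) := by
          exact_mod_cast congrArg Complex.ofReal (hφODE x hx).symm
        rwa [he]
      · exact_mod_cast h0
      · exact_mod_cast hz
    have := hzero (1/2) (by norm_num)
    have hp := hpos (1/2) (by norm_num)
    rw [Complex.ofReal_eq_zero] at this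
    linarith
  constructor
  · intro w w' w'' hw hw0 hw1 heq
    refine ⟨w' 0 / (φ' 0 : ℂ), ?_⟩
    set c : ℂ := w' 0 / (φ' 0 : ℂ) with hc
    have hd0' : ((φ' 0 : ℂ)) ≠ 0 := by exact_mod_cast hd0
    have key : ∀ x ∈ Set.Icc (0:ℝ) 1, w x - c * (φ x : ℂ) = 0 := by
      apply lin_uniq hqbound (u' := fun x => w' x - c * (φ' x : ℂ))
      · intro x hx
        exact (hw x hx).1.sub (((hdd x hx).1.ofReal_comp).const_mul c)
      · intro x hx
        have hder := (hw x hx).2.sub (((hdd x hx).2.1.ofReal_comp).const_mul c)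
        have hval : w'' x - c * (φ'' x : ℂ) = (q x : ℂ) * (w x - c * (φ x : ℂ)) := by
          have h1 : w'' x = ((μ : ℂ) - (φ x : ℂ)^2) * w x := by
            have := heq x hx; linear_combination -this
          have h2 : (φ'' x : ℂ) = (q x : ℂ) * (φ x : ℂ) := by
            exact_mod_cast congrArg Complex.ofReal (hφODE x hx)
          have h3 : ((q x : ℂ)) = (μ : ℂ) - (φ x : ℂ)^2 := by
            have := hqx x hx; push_cast [this]; ring
          rw [h1, h2, h3]; ring
        rwa [hval] at hder
      · rw [hw0, h0]; push_cast; ring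
      · have : c * (φ' 0 : ℂ) = w' 0 := div_mul_cancel₀ _ hd0'
        rw [← this]; ring
    intro x hx
    have := key x hx
    exact sub_eq_zero.mp this
  · intro c
    refine ⟨fun x => c * (φ' x : ℂ), fun x => c * (φ'' x : ℂ), ?_, ?_⟩
    · intro x hx
      exact ⟨((hdd x hx).1.ofReal_comp).const_mul c, ((hdd x hx).2.1.ofReal_comp).const_mul c⟩
    · intro x hx
      have h := hODE x hx
      have h' : ((φ'' x : ℂ)) + (φ x : ℂ)^3 = (μ : ℂ) * (φ x : ℂ) := by exact_mod_cast h
      linear_combination (-c) * h'
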